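/- Let p be a prime. The number of pairs (g,h) with 1 ≤ g,h ≤ p-1 such that g^h ≡ h (mod p) and gcd(h,p-1) = 1 is exactly φ(p-1). -/

import Mathlib

private lemma pow_one_add_mul_aux (p : ℕ) (hp : p.Prime) (g : ZMod p) (hg : g ≠ 0) (q : ℕ) :
    g ^ (1 + q * (p - 1)) = g := by
  haveI : Fact p.Prime := ⟨hp⟩
  rw [pow_add, pow_one, pow_mul', ZMod.pow_card_sub_one_eq_one hg, one_pow, mul_one]

private lemma exists_inv_aux (h n : ℕ) (hh : 1 ≤ h) (hn : 1 ≤ n) (hc : Nat.Coprime h n) :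
    ∃ k q, h * k = 1 + q * n := by
  rcases Nat.lt_or_ge 1 n with h1 | h1
  · obtain ⟨k, -, hk⟩ := Nat.exists_mul_mod_eq_one_of_coprime hc h1
    exact ⟨k, h * k / n, by rw [← hk]; exact (Nat.mod_add_div' (h * k) n).symm⟩
  · have hn1 : n = 1 := by omega
    subst hn1
    exact ⟨1, h - 1, by omega⟩

private lemma g_unique_aux (p : ℕ) (hp : p.Prime) (h g1 g2 : ℕ)
    (hg1 : 1 ≤ g1) (hg1' : g1 ≤ p - 1) (hg2 : 1 ≤ g2) (hg2' : g2 ≤ p - 1)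
    (hh : 1 ≤ h) (hc : Nat.Coprime h (p - 1))
    (he : g1 ^ h ≡ g2 ^ h [MOD p]) : g1 = g2 := by
  haveI : Fact p.Prime := ⟨hp⟩
  have hp2 := hp.two_le
  have hp1 : 1 ≤ p - 1 := by omega
  obtain ⟨k, q, hkq⟩ := exists_inv_aux h (p - 1) hh hp1 hc
  have hz : ((g1 : ZMod p)) ^ h = (g2 : ZMod p) ^ h := by
    have := (ZMod.natCast_eq_natCast_iff _ _ _).mpr he
    push_cast at this
    exact this
  have h1 : (g1 : ZMod p) ≠ 0 := by
    rw [Ne, ZMod.natCast_eq_zero_iff]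
    intro hd
    have := Nat.le_of_dvd (by omega) hd
    omega
  have h2 : (g2 : ZMod p) ≠ 0 := by
    rw [Ne, ZMod.natCast_eq_zero_iff]
    intro hd
    have := Nat.le_of_dvd (by omega) hd
    omega
  have hcast : (g1 : ZMod p) = g2 := by
    calc (g1 : ZMod p) = (g1 : ZMod p) ^ (1 + q * (p - 1)) :=
          (pow_one_add_mul_aux p hp _ h1 q).symm
    _ = ((g1 : ZMod p) ^ h) ^ k := by rw [← pow_mul, hkq]
    _ = ((g2 : ZMod p) ^ h) ^ k := by rw [hz]
    _ = (g2 : ZMod p) ^ (1 + q * (p - 1)) := by rw [← pow_mul, hkq]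
    _ = g2 := pow_one_add_mul_aux p hp _ h2 q
  have := (ZMod.natCast_eq_natCast_iff _ _ _).mp hcast
  have e1 : g1 % p = g1 := Nat.mod_eq_of_lt (by omega)
  have e2 : g2 % p = g2 := Nat.mod_eq_of_lt (by omega)
  unfold Nat.ModEq at this
  omega

/-- For a prime `p`, the number of pairs `(g,h)` with `1 ≤ g,h ≤ p-1`, `g^h ≡ h (mod p)`
and `gcd(h, p-1) = 1` is exactly `φ(p-1)`. -/
theorem fixed_points_hRP_count (p : ℕ) (hp : p.Prime) :
    Nat.card {gh : ℕ × ℕ // 1 ≤ gh.1 ∧ gh.1 ≤ p - 1 ∧ 1 ≤ gh.2 ∧ gh.2 ≤ p - 1 ∧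
        gh.1 ^ gh.2 ≡ gh.2 [MOD p] ∧ Nat.gcd gh.2 (p - 1) = 1} = (p - 1).totient := by
  haveI : Fact p.Prime := ⟨hp⟩
  have hp2 := hp.two_le
  have hp1 : 1 ≤ p - 1 := by omega
  have key : Nat.card {gh : ℕ × ℕ // 1 ≤ gh.1 ∧ gh.1 ≤ p - 1 ∧ 1 ≤ gh.2 ∧ gh.2 ≤ p - 1 ∧
        gh.1 ^ gh.2 ≡ gh.2 [MOD p] ∧ Nat.gcd gh.2 (p - 1) = 1}
      = Nat.card {m : ℕ // m ∈ (Finset.range (p - 1)).filter (Nat.Coprime (p - 1))} := by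
    apply Nat.card_eq_of_bijective (fun gh => ⟨gh.1.2 % (p - 1), by
      obtain ⟨⟨g, h⟩, hga, hgb, hha, hhb, hmod, hgcd⟩ := gh
      simp only [Finset.mem_filter, Finset.mem_range]
      refine ⟨Nat.mod_lt _ (by omega), ?_⟩
      have : Nat.gcd (h % (p - 1)) (p - 1) = 1 := by
        rw [← Nat.gcd_rec]
        rwa [Nat.gcd_comm]
      exact Nat.Coprime.symm this⟩)
    constructor
    · rintro ⟨⟨g1, h1⟩, hg1a, hg1b, hh1a, hh1b, hm1, hc1⟩
        ⟨⟨g2, h2⟩, hg2a, hg2b, hh2a, hh2b, hm2, hc2⟩ heq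
      have hmodeq : h1 % (p - 1) = h2 % (p - 1) := congrArg Subtype.val heq
      have keyx : ∀ x : ℕ, 1 ≤ x → x ≤ p - 1 →
          (x % (p - 1) = 0 ∧ x = p - 1) ∨ x % (p - 1) = x := by
        intro x hx1 hx2
        rcases eq_or_lt_of_le hx2 with e | l
        · left; subst e; exact ⟨Nat.mod_self _, rfl⟩
        · right; exact Nat.mod_eq_of_lt l
      have hh : h1 = h2 := by
        rcases keyx h1 hh1a hh1b with ⟨e1, e1'⟩ | e1 <;>
          rcases keyx h2 hh2a hh2b with ⟨e2, e2'⟩ | e2 <;> omega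
      have hg : g1 = g2 := by
        apply g_unique_aux p hp h1 g1 g2 hg1a hg1b hg2a hg2b hh1a hc1
        subst hh
        exact hm1.trans (hm2.symm)
      exact Subtype.ext (by rw [Prod.mk.injEq]; exact ⟨hg, hh⟩)
    · rintro ⟨m, hm⟩
      simp only [Finset.mem_filter, Finset.mem_range] at hm
      obtain ⟨hmlt, hmcop⟩ := hm
      by_cases hm0 : m = 0
      · -- then p - 1 = 1
        have hp11 : p - 1 = 1 := by
          have := hmcop
          rw [hm0, Nat.coprime_zero_right] at this
          exact this
        refine ⟨⟨(1, 1), ?_⟩, ?_⟩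
        · exact ⟨le_refl 1, by omega, le_refl 1, by omega, Nat.ModEq.refl _, by simp [hp11]⟩
        · apply Subtype.ext
          simp [hp11, hm0]
      · have hm1 : 1 ≤ m := by omega
        have hcop : Nat.Coprime m (p - 1) := hmcop.symm
        obtain ⟨k, q, hkq⟩ := exists_inv_aux m (p - 1) hm1 hp1 hcop
        have hndvd : ¬ p ∣ m ^ k := by
          intro hd
          have := Nat.le_of_dvd (by omega) (hp.dvd_of_dvd_pow hd)
          omega
        have hgpos : 0 < m ^ k % p := by
          rcases Nat.eq_zero_or_pos (m ^ k % p) with e | e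
          · exact absurd (Nat.dvd_of_mod_eq_zero e) hndvd
          · exact e
        have hglt : m ^ k % p < p := Nat.mod_lt _ (by omega)
        have hmne : (m : ZMod p) ≠ 0 := by
          rw [Ne, ZMod.natCast_eq_zero_iff]
          intro hd
          have := Nat.le_of_dvd (by omega) hd
          omega
        refine ⟨⟨(m ^ k % p, m), ?_⟩, ?_⟩
        · refine ⟨hgpos, by omega, hm1, by omega, ?_, hcop⟩
          rw [← ZMod.natCast_eq_natCast_iff]
          push_cast
          rw [ZMod.natCast_mod]
          push_cast
          rw [← pow_mul, mul_comm k m, hkq]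
          exact pow_one_add_mul_aux p hp _ hmne q
        · apply Subtype.ext
          exact Nat.mod_eq_of_lt hmlt
  rw [key, Nat.card_eq_fintype_card, Fintype.card_coe]
  rfl
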